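/- Let A be a skew PBW extension of R. Define F_0(A) = R and, for m ≥ 1, F_m(A) = {f ∈ A : deg(f) ≤ m}, where the degree of a nonzero element is the maximal total degree of a standard monomial appearing in its (unique) representation over the left R-basis of standard monomials. Then {F_m(A)} is an increasing ring filtration of A: F_m(A) ⊆ F_{m+1}(A), 1 ∈ F_0(A), ⋃_m F_m(A) = A, and F_n(A)·F_m(A) ⊆ F_{n+m}(A) for all n,m ≥ 0. -/

import Mathlib

open scoped BigOperators

/-- The ordered standard monomial `x₁^{α₁} ⋯ xₙ^{αₙ}`. -/
def monom {A : Type*} [Monoid A] {n : ℕ} (x : Fin n → A) (α : Fin n → ℕ) : A :=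
  (List.ofFn fun i => x i ^ α i).prod

/-- `A` is a free left `R`-module (via the embedding `φ`) with basis the standard monomials:
every element has a unique representation as a finite left `R`-linear combination of the
standard monomials. -/
def IsPBWBasis {R A : Type*} [Ring R] [Ring A] {n : ℕ} (φ : R →+* A) (x : Fin n → A) : Prop :=
  ∀ a : A, ∃! c : (Fin n → ℕ) →₀ R, a = c.sum fun α r => φ r * monom x α

/-- A skew PBW extension `A` of `R` (Definition 2.1), with the defining constants
`cR i r` (for `r ≠ 0`) and `cC i j` recorded as data. -/
structure SkewPBW (R A : Type*) [Ring R] [Ring A] (n : ℕ) where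
  /-- the inclusion `R ⊆ A` -/
  φ : R →+* A
  inj : Function.Injective φ
  /-- the variables `x₁, …, xₙ` -/
  x : Fin n → A
  /-- (ii): `A` is a free left `R`-module with basis the standard monomials -/
  basis : IsPBWBasis φ x
  cR : Fin n → R → R
  cR_ne : ∀ i (r : R), r ≠ 0 → cR i r ≠ 0
  /-- (iii): `xᵢ r − c_{i,r} xᵢ ∈ R` -/
  hR : ∀ i (r : R), r ≠ 0 → ∃ s : R, x i * φ r - φ (cR i r) * x i = φ s
  cC : Fin n → Fin n → R
  cC_ne : ∀ i j, cC i j ≠ 0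
  /-- (iv): `xⱼ xᵢ − c_{i,j} xᵢ xⱼ ∈ R + Rx₁ + ⋯ + Rxₙ` -/
  hC : ∀ i j, ∃ (r0 : R) (r : Fin n → R),
    x j * x i - φ (cC i j) * (x i * x j) = φ r0 + ∑ t, φ (r t) * x t

/-- The degree filtration of a skew PBW extension: `F m` is the set of elements whose unique
representation over the left `R`-basis of standard monomials only involves monomials of total
degree `≤ m`.  (For `m = 0` this is exactly `R`.) -/
def degFiltration {R A : Type*} [Ring R] [Ring A] {n : ℕ} (φ : R →+* A) (x : Fin n → A)
    (m : ℕ) : Set A :=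
  {a : A | ∃ c : (Fin n → ℕ) →₀ R, (∀ α ∈ c.support, (∑ i, α i) ≤ m) ∧
    a = c.sum fun α r => φ r * monom x α}



section MonLemmas
variable {A : Type*} [Monoid A]

lemma monom_zero {n : ℕ} (x : Fin n → A) : monom x 0 = 1 := by
  apply List.prod_eq_one
  intro y hy
  rw [List.mem_ofFn] at hy
  obtain ⟨k, rfl⟩ := hy
  simp

lemma monom_mul_x : ∀ {n : ℕ} (x : Fin n → A) (α : Fin n → ℕ) (j : Fin n),
    (∀ k, j < k → α k = 0) → monom x α * x j = monom x (α + Pi.single j 1)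
  | 0, _, _, j, _ => j.elim0
  | n+1, x, α, j, h => by
    set β : Fin (n+1) → ℕ := α + Pi.single j 1 with hβ
    rw [monom, monom, List.ofFn_succ, List.ofFn_succ, List.prod_cons, List.prod_cons]
    rcases Fin.eq_zero_or_eq_succ j with rfl | ⟨i, rfl⟩
    · have htail : ∀ k : Fin n, α k.succ = 0 := fun k => h k.succ (Fin.succ_pos k)
      have h1 : (List.ofFn fun i : Fin n => x i.succ ^ α i.succ).prod = 1 := by
        apply List.prod_eq_one; intro y hy
        rw [List.mem_ofFn] at hy; obtain ⟨k, rfl⟩ := hy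
        simp [htail k]
      have h2 : (List.ofFn fun i : Fin n => x i.succ ^ β i.succ).prod = 1 := by
        apply List.prod_eq_one; intro y hy
        rw [List.mem_ofFn] at hy; obtain ⟨k, rfl⟩ := hy
        have hz : β k.succ = 0 := by
          simp [hβ, htail k, Pi.single_apply, Fin.succ_ne_zero k]
        simp [hz]
      rw [h1, h2, mul_one, mul_one]
      have hz0 : β 0 = α 0 + 1 := by simp [hβ]
      rw [hz0, pow_succ]
    · have hcond : ∀ k : Fin n, i < k → α k.succ = 0 := fun k hk =>
        h k.succ (Fin.succ_lt_succ_iff.mpr hk)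
      have IH := monom_mul_x (fun k => x k.succ) (fun k => α k.succ) i hcond
      have h0 : β 0 = α 0 := by
        simp [hβ, Pi.single_apply, (Fin.succ_ne_zero i).symm]
      have hfun : (fun k : Fin n => x k.succ ^ β k.succ)
          = (fun k : Fin n => x k.succ ^ (((fun k : Fin n => α k.succ) + (Pi.single i 1 : Fin n → ℕ)) k)) := by
        funext k
        have : β k.succ = α k.succ + (Pi.single i 1 : Fin n → ℕ) k := by
          simp [hβ, Pi.single_apply, Fin.succ_inj]
        rw [this]
        rfl
      rw [h0, hfun, mul_assoc]
      rw [monom, monom] at IH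
      rw [IH]

lemma monom_single {n : ℕ} (x : Fin n → A) (i : Fin n) : monom x (Pi.single i 1) = x i := by
  have := monom_mul_x x 0 i (fun k _ => rfl)
  rw [monom_zero, one_mul, zero_add] at this
  exact this.symm

end MonLemmas

section FiltLemmas
variable {R A : Type*} [Ring R] [Ring A] {n : ℕ} (φ : R →+* A) (x : Fin n → A)

lemma degF_zero_mem (m : ℕ) : (0 : A) ∈ degFiltration φ x m :=
  ⟨0, by simp, by simp⟩

lemma degF_add_mem {m : ℕ} {a b : A} (ha : a ∈ degFiltration φ x m)
    (hb : b ∈ degFiltration φ x m) : a + b ∈ degFiltration φ x m := by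
  obtain ⟨c, hc, rfl⟩ := ha
  obtain ⟨c', hc', rfl⟩ := hb
  refine ⟨c + c', fun α hα => ?_, ?_⟩
  · rcases Finset.mem_union.mp (Finsupp.support_add hα) with h | h
    · exact hc α h
    · exact hc' α h
  · rw [Finsupp.sum_add_index' (fun α => by simp) (fun α r s => by rw [map_add, add_mul])]

lemma degF_sum_mem {m : ℕ} {ι : Type*} (s : Finset ι) (f : ι → A)
    (h : ∀ i ∈ s, f i ∈ degFiltration φ x m) :
    (∑ i ∈ s, f i) ∈ degFiltration φ x m := by
  classical
  induction s using Finset.induction_on with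
  | empty => simpa using degF_zero_mem φ x m
  | insert a s hni ih =>
    rw [Finset.sum_insert hni]
    exact degF_add_mem φ x (h _ (Finset.mem_insert_self _ _))
      (ih fun i hi => h i (Finset.mem_insert_of_mem hi))

lemma degF_smul_mem {m : ℕ} {a : A} (r : R) (ha : a ∈ degFiltration φ x m) :
    φ r * a ∈ degFiltration φ x m := by
  obtain ⟨c, hc, rfl⟩ := ha
  refine ⟨c.mapRange (r * ·) (mul_zero r), fun α hα => hc α (Finsupp.support_mapRange hα), ?_⟩
  rw [Finsupp.sum_mapRange_index (fun α => by simp)]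
  rw [Finsupp.sum, Finsupp.sum, Finset.mul_sum]
  exact Finset.sum_congr rfl fun α _ => by rw [map_mul, mul_assoc]

lemma degF_single_mem {m : ℕ} (r : R) (α : Fin n → ℕ) (hα : (∑ i, α i) ≤ m) :
    φ r * monom x α ∈ degFiltration φ x m := by
  refine ⟨Finsupp.single α r, fun β hβ => ?_, ?_⟩
  · rw [Finsupp.mem_support_single] at hβ
    rw [hβ.1]; exact hα
  · rw [Finsupp.sum_single_index (by simp)]

lemma degF_mono {m m' : ℕ} (h : m ≤ m') :
    degFiltration φ x m ⊆ degFiltration φ x m' := by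
  rintro a ⟨c, hc, rfl⟩
  exact ⟨c, fun α hα => le_trans (hc α hα) h, rfl⟩

/-- to prove `a * g ∈ F k` for all `a ∈ F m`, enough to do it for basis elements. -/
lemma degF_mul_right {g : A} {m k : ℕ}
    (H : ∀ α : Fin n → ℕ, (∑ i, α i) ≤ m → monom x α * g ∈ degFiltration φ x k)
    {a : A} (ha : a ∈ degFiltration φ x m) : a * g ∈ degFiltration φ x k := by
  obtain ⟨c, hc, rfl⟩ := ha
  rw [Finsupp.sum, Finset.sum_mul]
  refine degF_sum_mem φ x _ _ fun α hα => ?_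
  rw [mul_assoc]
  exact degF_smul_mem φ x _ (H α (hc α hα))

end FiltLemmas

lemma monom_split {A : Type*} [Monoid A] {n : ℕ} (x : Fin n → A) (β : Fin n → ℕ)
    (h : (∑ i, β i) ≠ 0) :
    ∃ (j : Fin n) (β' : Fin n → ℕ),
      (∀ k, β k ≠ 0 → k ≤ j) ∧ (∑ i, β' i) + 1 = ∑ i, β i ∧
      monom x β = monom x β' * x j := by
  classical
  have hne : (Finset.univ.filter fun k => β k ≠ 0).Nonempty := by
    by_contra hC
    rw [Finset.not_nonempty_iff_eq_empty, Finset.filter_eq_empty_iff] at hC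
    exact h (Finset.sum_eq_zero fun k hk => not_not.mp (hC hk))
  set j := Finset.max' _ hne with hjdef
  have hj : β j ≠ 0 := (Finset.mem_filter.mp (Finset.max'_mem _ hne)).2
  have hle : ∀ k, β k ≠ 0 → k ≤ j := fun k hk =>
    Finset.le_max' _ k (Finset.mem_filter.mpr ⟨Finset.mem_univ k, hk⟩)
  set β' : Fin n → ℕ := Function.update β j (β j - 1) with hβ'
  have heq : (β' + Pi.single j 1 : Fin n → ℕ) = β := by
    funext k
    simp only [Pi.add_apply]
    rw [hβ']
    by_cases hk : k = j
    · subst hk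
      rw [Function.update_self, Pi.single_eq_same]
      omega
    · rw [Function.update_of_ne hk, Pi.single_eq_of_ne hk, add_zero]
  refine ⟨j, β', hle, ?_, ?_⟩
  · calc (∑ i, β' i) + 1 = ∑ i, (β' + Pi.single j 1 : Fin n → ℕ) i := by
          simp [Finset.sum_add_distrib]
      _ = ∑ i, β i := by rw [heq]
  · have hcond : ∀ k, j < k → β' k = 0 := by
      intro k hk
      have hkj : k ≠ j := ne_of_gt hk
      rw [hβ', Function.update_apply, if_neg hkj]
      by_contra hzz
      exact absurd (hle k hzz) (not_le.mpr hk)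
    rw [← heq, ← monom_mul_x x β' j hcond]

section Main
variable {R A : Type*} [Ring R] [Ring A] {n : ℕ}

lemma skewPBW_key (E : SkewPBW R A n) : ∀ d : ℕ,
    (∀ β : Fin n → ℕ, (∑ k, β k) ≤ d → ∀ r : R,
       monom E.x β * E.φ r ∈ degFiltration E.φ E.x (∑ k, β k)) ∧
    (∀ (i : Fin n) (β : Fin n → ℕ), (∑ k, β k) ≤ d →
       monom E.x β * E.x i ∈ degFiltration E.φ E.x ((∑ k, β k) + 1)) := by
  intro d
  induction d with
  | zero =>
    have hz : ∀ β : Fin n → ℕ, (∑ k, β k) ≤ 0 → β = 0 := by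
      intro β hβ
      funext k
      have := Finset.sum_eq_zero_iff.mp (Nat.le_zero.mp hβ) k (Finset.mem_univ k)
      simpa using this
    constructor
    · intro β hβ r
      rw [hz β hβ, monom_zero, one_mul]
      have := degF_single_mem E.φ E.x (m := 0) r 0 (by simp)
      rw [monom_zero, mul_one] at this
      simpa using this
    · intro i β hβ
      rw [hz β hβ, monom_zero, one_mul]
      have := degF_single_mem E.φ E.x (m := 1) 1 (Pi.single i 1) (by simp)
      rw [map_one, one_mul, monom_single] at this
      simpa using this
  | succ d IH =>
    obtain ⟨IHφ, IHx⟩ := IH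
    have Sφ : ∀ m, m ≤ d → ∀ (r : R) {a : A}, a ∈ degFiltration E.φ E.x m →
        a * E.φ r ∈ degFiltration E.φ E.x m := by
      intro m hm r a ha
      refine degF_mul_right E.φ E.x (fun α hα => ?_) ha
      exact degF_mono E.φ E.x (hα) (IHφ α (hα.trans hm) r)
    have Sx : ∀ m, m ≤ d → ∀ (i : Fin n) {a : A}, a ∈ degFiltration E.φ E.x m →
        a * E.x i ∈ degFiltration E.φ E.x (m + 1) := by
      intro m hm i a ha
      refine degF_mul_right E.φ E.x (fun α hα => ?_) ha
      exact degF_mono E.φ E.x (by omega) (IHx i α (hα.trans hm))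
    constructor
    · intro β hβ r
      by_cases hd : (∑ k, β k) ≤ d
      · exact IHφ β hd r
      have hsum : (∑ k, β k) = d + 1 := by omega
      by_cases hr : r = 0
      · subst hr
        rw [map_zero, mul_zero]
        exact degF_zero_mem E.φ E.x _
      obtain ⟨j, β', hle, hs1, hmon⟩ := monom_split E.x β (by omega)
      obtain ⟨s, hsrel⟩ := E.hR j r hr
      have hxr : E.x j * E.φ r = E.φ (E.cR j r) * E.x j + E.φ s := by
        rw [← hsrel]; abel
      have hβ'd : (∑ k, β' k) ≤ d := by omega
      have hid : (monom E.x β) * E.φ r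
          = (monom E.x β' * E.φ (E.cR j r)) * E.x j + monom E.x β' * E.φ s := by
        rw [hmon, mul_assoc, hxr]
        rw [mul_add, ← mul_assoc]
      rw [hid, hsum]
      refine degF_add_mem E.φ E.x ?_ ?_
      · refine Sx d le_rfl j ?_
        exact degF_mono E.φ E.x hβ'd (IHφ β' hβ'd _)
      · exact degF_mono E.φ E.x (by omega) (IHφ β' hβ'd s)
    · intro i β hβ
      by_cases hd : (∑ k, β k) ≤ d
      · exact IHx i β hd
      have hsum : (∑ k, β k) = d + 1 := by omega
      rw [hsum]
      clear hβ hd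
      have inner : ∀ (t : ℕ) (i : Fin n), n - (i : ℕ) ≤ t → ∀ β : Fin n → ℕ,
          (∑ k, β k) = d + 1 →
          monom E.x β * E.x i ∈ degFiltration E.φ E.x (d + 1 + 1) := by
        intro t
        induction t with
        | zero =>
          intro i hi
          have := i.isLt
          omega
        | succ t iht =>
          intro i hi β hβsum
          by_cases hcase : ∀ k, i < k → β k = 0
          · rw [monom_mul_x E.x β i hcase]
            have hmem := degF_single_mem E.φ E.x (m := d + 1 + 1) 1 (β + Pi.single i 1)
              (by simp [Finset.sum_add_distrib, hβsum])
            rwa [map_one, one_mul] at hmem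
          · push_neg at hcase
            obtain ⟨k₀, hk₀lt, hk₀ne⟩ := hcase
            obtain ⟨j, β', hle, hs1, hmon⟩ := monom_split E.x β (by omega)
            have hij : i < j := lt_of_lt_of_le hk₀lt (hle k₀ hk₀ne)
            obtain ⟨r0, rr, hrel⟩ := E.hC i j
            have hxx : E.x j * E.x i
                = E.φ (E.cC i j) * (E.x i * E.x j) + (E.φ r0 + ∑ u, E.φ (rr u) * E.x u) := by
              rw [← hrel]; abel
            have hβ'd : (∑ k, β' k) = d := by omega
            have hid : monom E.x β * E.x i
                = (((monom E.x β' * E.φ (E.cC i j)) * E.x i) * E.x j)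
                  + (monom E.x β' * E.φ r0
                    + ∑ u, (monom E.x β' * E.φ (rr u)) * E.x u) := by
              rw [hmon, mul_assoc, hxx]
              rw [mul_add, mul_add, Finset.mul_sum]
              simp only [mul_assoc]
            rw [hid]
            have hβ'F : monom E.x β' ∈ degFiltration E.φ E.x d := by
              have := degF_single_mem E.φ E.x 1 β' (le_of_eq hβ'd)
              rwa [map_one, one_mul] at this
            refine degF_add_mem E.φ E.x ?_ (degF_add_mem E.φ E.x ?_ ?_)
            · have h1 : monom E.x β' * E.φ (E.cC i j) ∈ degFiltration E.φ E.x d :=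
                Sφ d le_rfl _ hβ'F
              have h2 : (monom E.x β' * E.φ (E.cC i j)) * E.x i
                  ∈ degFiltration E.φ E.x (d + 1) := Sx d le_rfl i h1
              refine degF_mul_right E.φ E.x (fun α hα => ?_) h2
              by_cases hαd : (∑ k, α k) ≤ d
              · exact degF_mono E.φ E.x (by omega) (IHx j α hαd)
              · have hα1 : (∑ k, α k) = d + 1 := by omega
                refine iht j ?_ α hα1
                have := j.isLt
                have hij' : (i : ℕ) < (j : ℕ) := hij
                omega
            · exact degF_mono E.φ E.x (by omega) (Sφ d le_rfl r0 hβ'F)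
            · refine degF_sum_mem E.φ E.x _ _ fun u _ => ?_
              refine degF_mono E.φ E.x (by omega) (Sx d le_rfl u ?_)
              exact Sφ d le_rfl (rr u) hβ'F
      exact inner n i (by omega) β hsum

end Main


lemma degF_mul_monom {R A : Type*} [Ring R] [Ring A] {n : ℕ} (E : SkewPBW R A n) :
    ∀ (e : ℕ) (β : Fin n → ℕ), (∑ k, β k) ≤ e → ∀ (m : ℕ) {a : A},
      a ∈ degFiltration E.φ E.x m →
      a * monom E.x β ∈ degFiltration E.φ E.x (m + ∑ k, β k) := by
  intro e
  induction e with
  | zero =>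
    intro β hβ m a ha
    have hz : β = 0 := by
      funext k
      simpa using Finset.sum_eq_zero_iff.mp (Nat.le_zero.mp hβ) k (Finset.mem_univ k)
    rw [hz, monom_zero, mul_one]
    simpa using ha
  | succ e ihe =>
    intro β hβ m a ha
    by_cases h0 : (∑ k, β k) = 0
    · have hz : β = 0 := by
        funext k
        simpa using Finset.sum_eq_zero_iff.mp h0 k (Finset.mem_univ k)
      rw [hz, monom_zero, mul_one]
      simpa using ha
    obtain ⟨j, β', hle, hs1, hmon⟩ := monom_split E.x β h0
    rw [hmon, ← mul_assoc]
    have h1 : a * monom E.x β' ∈ degFiltration E.φ E.x (m + ∑ k, β' k) :=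
      ihe β' (by omega) m ha
    have h2 := degF_mul_right E.φ E.x (k := (m + ∑ k, β' k) + 1)
      (fun α hα => degF_mono E.φ E.x (by omega)
        ((skewPBW_key E (m + ∑ k, β' k)).2 j α hα)) h1
    have h3 : m + (∑ k, β k) = (m + ∑ k, β' k) + 1 := by omega
    rw [h3]
    exact h2

/-- **Theorem 2.5 (filtration part).**  Let `A` be a skew PBW extension of `R` and let
`F m = degFiltration` be the degree filtration (so `F 0 = R`).  Then `F` is an increasing
ring filtration of `A`: it is increasing, `1 ∈ F 0`, `F 0 = R`, `⋃ m, F m = A`, and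
`F n · F m ⊆ F (n + m)`. -/
theorem skewPBW_degFiltration_is_filtration {R A : Type*} [Ring R] [Ring A] {n : ℕ}
    (E : SkewPBW R A n) :
    (∀ m : ℕ, degFiltration E.φ E.x m ⊆ degFiltration E.φ E.x (m + 1)) ∧
    (1 : A) ∈ degFiltration E.φ E.x 0 ∧
    degFiltration E.φ E.x 0 = Set.range E.φ ∧
    (⋃ m : ℕ, degFiltration E.φ E.x m) = Set.univ ∧
    (∀ (N M : ℕ) (a b : A), a ∈ degFiltration E.φ E.x N → b ∈ degFiltration E.φ E.x M →
      a * b ∈ degFiltration E.φ E.x (N + M)) := by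
  classical
  refine ⟨fun m => degF_mono E.φ E.x (Nat.le_succ m), ?_, ?_, ?_, ?_⟩
  · have := degF_single_mem E.φ E.x (m := 0) 1 0 (by simp)
    rwa [map_one, one_mul, monom_zero] at this
  · ext a
    constructor
    · rintro ⟨c, hc, rfl⟩
      have hsupp : c.support ⊆ {0} := by
        intro α hα
        rw [Finset.mem_singleton]
        funext k
        simpa using Finset.sum_eq_zero_iff.mp (Nat.le_zero.mp (hc α hα)) k (Finset.mem_univ k)
      refine ⟨c 0, ?_⟩
      have hc0 : c = Finsupp.single 0 (c 0) := by
        ext α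
        by_cases hα : α = 0
        · subst hα; simp
        · rw [Finsupp.single_apply, if_neg (Ne.symm hα)]
          by_contra hne
          exact hα (Finset.mem_singleton.mp (hsupp (Finsupp.mem_support_iff.mpr hne)))
      rw [hc0, Finsupp.sum_single_index (by simp), monom_zero, mul_one]
      simp
    · rintro ⟨r, rfl⟩
      have := degF_single_mem E.φ E.x (m := 0) r 0 (by simp)
      rwa [monom_zero, mul_one] at this
  · ext a
    simp only [Set.mem_iUnion, Set.mem_univ, iff_true]
    obtain ⟨c, hc, -⟩ := E.basis a
    exact ⟨c.support.sup fun α => ∑ k, α k, c, fun α hα => Finset.le_sup hα, hc⟩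
  · intro N M a b ha hb
    obtain ⟨c, hc, rfl⟩ := hb
    rw [Finsupp.sum, Finset.mul_sum]
    refine degF_sum_mem E.φ E.x _ _ fun β hβ => ?_
    have h1 : a * E.φ (c β) ∈ degFiltration E.φ E.x N :=
      degF_mul_right E.φ E.x
        (fun α hα => degF_mono E.φ E.x hα ((skewPBW_key E N).1 α hα (c β))) ha
    have h2 := degF_mul_monom E (∑ k, β k) β le_rfl N h1
    have h3 : a * (E.φ (c β) * monom E.x β) = (a * E.φ (c β)) * monom E.x β := by
      rw [mul_assoc]
    rw [h3]
    exact degF_mono E.φ E.x (by have := hc β hβ; omega) h2
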